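/- arXiv:1603.05489 — 2 statements merged into one kernel-verified Lean document; each statement's English description precedes it below -/
import Mathlib

section
/- If Banach spaces E and F contain complemented subspaces isomorphic to M and N respectively, then the quotient space L(E;F)/L_K(E;F) contains a complemented subspace isomorphic to L(M;N)/L_K(M;N). -/
open scoped ENNReal

noncomputable section

/-- Lift a continuous linear map mapping `S` into `T` to quotients. -/
def quotLift {𝕜 X Y : Type*} [RCLike 𝕜] [NormedAddCommGroup X] [NormedSpace 𝕜 X]
    [NormedAddCommGroup Y] [NormedSpace 𝕜 Y] (S : Submodule 𝕜 X) (T : Submodule 𝕜 Y)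
    (f : X →L[𝕜] Y) (h : ∀ x ∈ S, f x ∈ T) : (X ⧸ S) →L[𝕜] (Y ⧸ T) :=
  have hker : S ≤ LinearMap.ker (T.mkQ.comp f.toLinearMap) := fun x hx => by
    simpa [Submodule.Quotient.mk_eq_zero] using h x hx
  LinearMap.mkContinuous (S.liftQ (T.mkQ.comp f.toLinearMap) hker) ‖f‖ (by
    intro x
    refine le_of_forall_pos_le_add fun δ hδ => ?_
    have hε : (0:ℝ) < δ / (‖f‖ + 1) := by positivity
    obtain ⟨m, rfl, hm⟩ := Submodule.Quotient.norm_mk_lt x hε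
    have h1 : ‖S.liftQ (T.mkQ.comp f.toLinearMap) hker (Submodule.Quotient.mk m)‖
        ≤ ‖f m‖ := by
      rw [Submodule.liftQ_apply]
      exact Submodule.Quotient.norm_mk_le T (f m)
    have h2 : ‖f m‖ ≤ ‖f‖ * ‖m‖ := f.le_opNorm m
    have h3 : ‖f‖ * ‖m‖ ≤ ‖f‖ * (‖(Submodule.Quotient.mk m : X ⧸ S)‖ + δ / (‖f‖ + 1)) :=
      mul_le_mul_of_nonneg_left hm.le (norm_nonneg f)
    have h4 : ‖f‖ * (δ / (‖f‖ + 1)) ≤ δ := by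
      rw [mul_div_assoc']
      rw [div_le_iff₀ (by positivity)]
      nlinarith [norm_nonneg f]
    nlinarith [norm_nonneg (Submodule.Quotient.mk m : X ⧸ S)])

@[simp] theorem quotLift_mk {𝕜 X Y : Type*} [RCLike 𝕜] [NormedAddCommGroup X] [NormedSpace 𝕜 X]
    [NormedAddCommGroup Y] [NormedSpace 𝕜 Y] (S : Submodule 𝕜 X) (T : Submodule 𝕜 Y)
    (f : X →L[𝕜] Y) (h : ∀ x ∈ S, f x ∈ T) (m : X) :
    quotLift S T f h (Submodule.Quotient.mk m) = Submodule.Quotient.mk (f m) := rfl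


/-- A normed space `E` has the approximation property if for every compact set `K` and `ε > 0`
there is a finite rank bounded operator `T : E → E` with `‖T x - x‖ < ε` on `K`. -/
def HasAP (𝕜 E : Type*) [NontriviallyNormedField 𝕜] [SeminormedAddCommGroup E]
    [NormedSpace 𝕜 E] : Prop :=
  ∀ K : Set E, IsCompact K → ∀ ε : ℝ, 0 < ε →
    ∃ T : E →L[𝕜] E, FiniteDimensional 𝕜 (LinearMap.range (T : E →ₗ[𝕜] E)) ∧
      ∀ x ∈ K, ‖T x - x‖ < ε

/-- If `E` and `F` contain complemented subspaces isomorphic to `M` and `N` respectively, then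
the Calkin-type quotient `L(E;F)/L_K(E;F)` contains a complemented subspace isomorphic to
`L(M;N)/L_K(M;N)`. -/
theorem quotient_opSpace_complemented (𝕜 E F M N : Type*) [RCLike 𝕜]
    [NormedAddCommGroup E] [NormedSpace 𝕜 E] [CompleteSpace E]
    [NormedAddCommGroup F] [NormedSpace 𝕜 F] [CompleteSpace F]
    [NormedAddCommGroup M] [NormedSpace 𝕜 M] [CompleteSpace M]
    [NormedAddCommGroup N] [NormedSpace 𝕜 N] [CompleteSpace N]
    (hM : ∃ (A₁ : M →L[𝕜] E) (B₁ : E →L[𝕜] M), B₁.comp A₁ = ContinuousLinearMap.id 𝕜 M)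
    (hN : ∃ (A₂ : N →L[𝕜] F) (B₂ : F →L[𝕜] N), B₂.comp A₂ = ContinuousLinearMap.id 𝕜 N) :
    ∃ (C : ((M →L[𝕜] N) ⧸ compactOperator (RingHom.id 𝕜) M N) →L[𝕜]
            ((E →L[𝕜] F) ⧸ compactOperator (RingHom.id 𝕜) E F))
      (D : ((E →L[𝕜] F) ⧸ compactOperator (RingHom.id 𝕜) E F) →L[𝕜]
            ((M →L[𝕜] N) ⧸ compactOperator (RingHom.id 𝕜) M N)),
      D.comp C = ContinuousLinearMap.id 𝕜 ((M →L[𝕜] N) ⧸ compactOperator (RingHom.id 𝕜) M N) := by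
  obtain ⟨A₁, B₁, hMB⟩ := hM
  obtain ⟨A₂, B₂, hNB⟩ := hN
  -- Φ : S ↦ A₂ ∘ S ∘ B₁
  set Φ : (M →L[𝕜] N) →L[𝕜] (E →L[𝕜] F) :=
    (ContinuousLinearMap.compL 𝕜 E N F A₂).comp
      ((ContinuousLinearMap.compL 𝕜 E M N).flip B₁) with hΦ
  set Ψ : (E →L[𝕜] F) →L[𝕜] (M →L[𝕜] N) :=
    (ContinuousLinearMap.compL 𝕜 M F N B₂).comp
      ((ContinuousLinearMap.compL 𝕜 M E F).flip A₁) with hΨ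
  have hΦapp : ∀ S : M →L[𝕜] N, Φ S = A₂.comp (S.comp B₁) := fun S => rfl
  have hΨapp : ∀ T : E →L[𝕜] F, Ψ T = B₂.comp (T.comp A₁) := fun T => rfl
  have hΦcpt : ∀ S ∈ compactOperator (RingHom.id 𝕜) M N,
      Φ S ∈ compactOperator (RingHom.id 𝕜) E F := by
    intro S hS
    have : IsCompactOperator (⇑S) := hS
    exact ((this.comp_clm B₁).clm_comp A₂ : IsCompactOperator (⇑A₂ ∘ ⇑S ∘ ⇑B₁))
  have hΨcpt : ∀ T ∈ compactOperator (RingHom.id 𝕜) E F,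
      Ψ T ∈ compactOperator (RingHom.id 𝕜) M N := by
    intro T hT
    have : IsCompactOperator (⇑T) := hT
    exact ((this.comp_clm A₁).clm_comp B₂ : IsCompactOperator (⇑B₂ ∘ ⇑T ∘ ⇑A₁))
  refine ⟨quotLift _ _ Φ hΦcpt, quotLift _ _ Ψ hΨcpt, ?_⟩
  ext x
  obtain ⟨S, rfl⟩ := Submodule.Quotient.mk_surjective _ x
  simp only [ContinuousLinearMap.coe_comp', Function.comp_apply, quotLift_mk,
    ContinuousLinearMap.coe_id', id_eq]
  congr 1
  rw [hΨapp, hΦapp]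
  ext v
  have h1 : B₁ (A₁ v) = v := congrArg (fun g => g v) hMB
  have h2 : ∀ y, B₂ (A₂ y) = y := fun y => congrArg (fun g => g y) hNB
  simp [h1, h2]
end
end

section
/- If 1 < q < p < ∞, then every bounded linear operator from ℓ_p to ℓ_q is compact, so L(ℓ_p;ℓ_q) = L_K(ℓ_p;ℓ_q) and the quotient L(ℓ_p;ℓ_q)/L_K(ℓ_p;ℓ_q) is the zero space. -/
open scoped ENNReal

noncomputable section

set_option maxHeartbeats 1000000

open Filter Topology Metric

namespace PittAux

variable {𝕜 : Type*} [RCLike 𝕜] {r : ℝ≥0∞} [hr1 : Fact (1 ≤ r)]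

lemma rtr_pos (hr : r ≠ ∞) : 0 < r.toReal :=
  ENNReal.toReal_pos (by
    intro h; exact absurd (h ▸ hr1.out) (by simp)) hr

lemma memℓp_indicator (hr : r ≠ ∞) (S : Set ℕ) (f : lp (fun _ : ℕ => 𝕜) r) :
    Memℓp (S.indicator (⇑f)) r := by
  have hrr := rtr_pos (r := r) hr
  apply memℓp_gen
  refine Summable.of_nonneg_of_le (fun i => Real.rpow_nonneg (norm_nonneg _) _)
    (fun i => ?_) ((lp.memℓp f).summable hrr)
  refine Real.rpow_le_rpow (norm_nonneg _) ?_ hrr.le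
  by_cases h : i ∈ S <;> simp [Set.indicator, h]

/-- restriction of an `lp` element to a set of coordinates -/
def cut (hr : r ≠ ∞) (S : Set ℕ) (f : lp (fun _ : ℕ => 𝕜) r) : lp (fun _ : ℕ => 𝕜) r :=
  ⟨S.indicator (⇑f), memℓp_indicator hr S f⟩

@[simp] lemma cut_apply (hr : r ≠ ∞) (S : Set ℕ) (f : lp (fun _ : ℕ => 𝕜) r) (i : ℕ) :
    (cut hr S f : ∀ _ : ℕ, 𝕜) i = S.indicator (⇑f) i := rfl

lemma norm_cut_le (hr : r ≠ ∞) (S : Set ℕ) (f : lp (fun _ : ℕ => 𝕜) r) :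
    ‖cut hr S f‖ ≤ ‖f‖ := by
  have hrr := rtr_pos (r := r) hr
  rw [← Real.rpow_le_rpow_iff (norm_nonneg _) (norm_nonneg _) hrr,
    lp.norm_rpow_eq_tsum hrr, lp.norm_rpow_eq_tsum hrr]
  refine Summable.tsum_le_tsum (fun i => ?_) ((lp.memℓp _).summable hrr) ((lp.memℓp f).summable hrr)
  refine Real.rpow_le_rpow (norm_nonneg _) ?_ hrr.le
  by_cases h : i ∈ S <;> simp [Set.indicator, h]

lemma cut_compl_eq (hr : r ≠ ∞) (S : Set ℕ) (f : lp (fun _ : ℕ => 𝕜) r) :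
    f - cut hr S f = cut hr Sᶜ f := by
  ext i
  simp only [lp.coeFn_sub, Pi.sub_apply, cut_apply]
  by_cases h : i ∈ S <;> simp [Set.indicator, h]

lemma cut_Ico_compl (hr : r ≠ ∞) (c c' : ℕ) (hcc : c ≤ c') (f : lp (fun _ : ℕ => 𝕜) r) :
    cut hr (Set.Ico c c')ᶜ f = cut hr {i | i < c} f + cut hr {i | c' ≤ i} f := by
  ext i
  simp only [lp.coeFn_add, Pi.add_apply, cut_apply, Set.indicator, Set.mem_compl_iff,
    Set.mem_Ico, Set.mem_setOf_eq]
  by_cases h1 : i < c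
  · have h2 : ¬ c' ≤ i := by omega
    simp [h1, h2]
  · by_cases h2 : c' ≤ i <;> simp [h1, h2] <;> omega

lemma norm_head_rpow (hr : r ≠ ∞) (c : ℕ) (f : lp (fun _ : ℕ => 𝕜) r) :
    ‖cut hr {i | i < c} f‖ ^ r.toReal = ∑ i ∈ Finset.range c, ‖f i‖ ^ r.toReal := by
  have hrr := rtr_pos (r := r) hr
  rw [lp.norm_rpow_eq_tsum hrr]
  rw [tsum_eq_sum (s := Finset.range c) (fun i hi => ?_)]
  · refine Finset.sum_congr rfl (fun i hi => ?_)
    rw [Finset.mem_range] at hi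
    simp [Set.indicator, hi]
  · rw [Finset.mem_range, not_lt] at hi
    simp [Set.indicator, not_lt.mpr hi, Real.zero_rpow hrr.ne']

lemma norm_tail_rpow (hr : r ≠ ∞) (c : ℕ) (f : lp (fun _ : ℕ => 𝕜) r) :
    ‖cut hr {i | c ≤ i} f‖ ^ r.toReal = ∑' i, ‖f (i + c)‖ ^ r.toReal := by
  have hrr := rtr_pos (r := r) hr
  rw [lp.norm_rpow_eq_tsum hrr]
  rw [← Summable.sum_add_tsum_nat_add c ((lp.memℓp _).summable hrr)]
  have h1 : ∑ i ∈ Finset.range c, ‖(cut hr {i | c ≤ i} f : ∀ _ : ℕ, 𝕜) i‖ ^ r.toReal = 0 := by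
    refine Finset.sum_eq_zero (fun i hi => ?_)
    rw [Finset.mem_range] at hi
    simp [Set.indicator, not_le.mpr hi, Real.zero_rpow hrr.ne']
  rw [h1, zero_add]
  refine tsum_congr (fun i => ?_)
  simp [Set.indicator, Nat.le_add_left]

lemma norm_add_rpow (hr : r ≠ ∞) (f g : lp (fun _ : ℕ => 𝕜) r)
    (h : ∀ i, (f : ∀ _ : ℕ, 𝕜) i = 0 ∨ (g : ∀ _ : ℕ, 𝕜) i = 0) :
    ‖f + g‖ ^ r.toReal = ‖f‖ ^ r.toReal + ‖g‖ ^ r.toReal := by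
  have hrr := rtr_pos (r := r) hr
  rw [lp.norm_rpow_eq_tsum hrr, lp.norm_rpow_eq_tsum hrr, lp.norm_rpow_eq_tsum hrr,
    ← Summable.tsum_add ((lp.memℓp f).summable hrr) ((lp.memℓp g).summable hrr)]
  refine tsum_congr (fun i => ?_)
  rw [lp.coeFn_add, Pi.add_apply]
  rcases h i with h' | h' <;>
    simp [h', Real.zero_rpow hrr.ne']

lemma norm_sum_blocks_rpow (hr : r ≠ ∞) (k : ℕ → ℕ) (hk : Monotone k)
    (g : ℕ → lp (fun _ : ℕ => 𝕜) r)
    (hg : ∀ n i, (g n : ∀ _ : ℕ, 𝕜) i ≠ 0 → k n ≤ i ∧ i < k (n + 1)) (N : ℕ) :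
    ‖∑ n ∈ Finset.range N, g n‖ ^ r.toReal = ∑ n ∈ Finset.range N, ‖g n‖ ^ r.toReal := by
  have hrr := rtr_pos (r := r) hr
  induction N with
  | zero => simp [Real.zero_rpow hrr.ne']
  | succ N ih =>
    rw [Finset.sum_range_succ, Finset.sum_range_succ, ← ih,
      norm_add_rpow hr _ _ (fun i => ?_)]
    by_cases h : (g N : ∀ _ : ℕ, 𝕜) i = 0
    · right; exact h
    · left
      obtain ⟨hi1, _⟩ := hg N i h
      rw [lp.coeFn_sum, Finset.sum_apply]
      refine Finset.sum_eq_zero (fun n hn => ?_)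
      rw [Finset.mem_range] at hn
      by_contra h'
      obtain ⟨_, h2⟩ := hg n i h'
      exact absurd (h2.trans_le ((hk (Nat.succ_le_of_lt hn)).trans hi1)) (lt_irrefl _)

lemma glide {𝕜 : Type*} [RCLike 𝕜] {p q : ℝ≥0∞} [Fact (1 ≤ p)] [Fact (1 ≤ q)]
    (hqp : q < p) (hp : p < ⊤)
    (T : lp (fun _ : ℕ => 𝕜) p →L[𝕜] lp (fun _ : ℕ => 𝕜) q)
    (D : ℕ → lp (fun _ : ℕ => 𝕜) p) (hD : ∀ n, ‖D n‖ ≤ 1)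
    (δ : ℝ) (hδ : 0 < δ) (hTD : ∀ n, δ ≤ ‖T (D n)‖)
    (hD0 : ∀ j, Tendsto (fun n => (D n : ∀ _ : ℕ, 𝕜) j) atTop (𝓝 (0 : 𝕜)))
    (hV0 : ∀ j, Tendsto (fun n => (T (D n) : ∀ _ : ℕ, 𝕜) j) atTop (𝓝 (0 : 𝕜))) : False := by
  have hpt : p ≠ ∞ := hp.ne
  have hqt : q ≠ ∞ := (hqp.trans hp).ne
  set pr := p.toReal with hprdef
  set qr := q.toReal with hqrdef
  have hpr : 0 < pr := rtr_pos hpt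
  have hqr : 0 < qr := rtr_pos hqt
  have hqrpr : qr < pr := ENNReal.toReal_strict_mono hpt hqp
  set V : ℕ → lp (fun _ : ℕ => 𝕜) q := fun n => T (D n) with hVdef
  set ε := δ / 8 with hεdef
  have hεpos : 0 < ε := by positivity
  set en : ℕ → ℝ := fun n => ε * (2 : ℝ)⁻¹ ^ n with hendef
  have hen_pos : ∀ n, 0 < en n := fun n => by positivity
  have hen_le : ∀ n, en n ≤ ε := fun n => by
    have h1 : ((2 : ℝ)⁻¹) ^ n ≤ 1 := pow_le_one₀ (by norm_num) (by norm_num)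
    calc en n = ε * (2 : ℝ)⁻¹ ^ n := rfl
      _ ≤ ε * 1 := by nlinarith
      _ = ε := mul_one ε
  -- choice of an index with small heads
  have hM : ∀ n c : ℕ, ∃ m,
      (∑ i ∈ Finset.range c, ‖(D m : ∀ _ : ℕ, 𝕜) i‖ ^ pr) < en n ^ pr ∧
      (∑ i ∈ Finset.range c, ‖(V m : ∀ _ : ℕ, 𝕜) i‖ ^ qr) < en n ^ qr := by
    intro n c
    have key : ∀ (r' : ℝ), 0 < r' → ∀ (W : ℕ → lp (fun _ : ℕ => 𝕜) p) ,
        True → True := fun _ _ _ _ => trivial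
    have l1 : Tendsto (fun m => ∑ i ∈ Finset.range c, ‖(D m : ∀ _ : ℕ, 𝕜) i‖ ^ pr)
        atTop (𝓝 0) := by
      have h0 : (0:ℝ) = ∑ i ∈ Finset.range c, (0:ℝ) := by simp
      rw [h0]
      refine tendsto_finset_sum _ (fun i _ => ?_)
      have h1 : Tendsto (fun m => ‖(D m : ∀ _ : ℕ, 𝕜) i‖) atTop (𝓝 0) := by
        simpa using (hD0 i).norm
      have h2 := h1.rpow_const (Or.inr hpr.le)
      simpa [Real.zero_rpow hpr.ne'] using h2
    have l2 : Tendsto (fun m => ∑ i ∈ Finset.range c, ‖(V m : ∀ _ : ℕ, 𝕜) i‖ ^ qr)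
        atTop (𝓝 0) := by
      have h0 : (0:ℝ) = ∑ i ∈ Finset.range c, (0:ℝ) := by simp
      rw [h0]
      refine tendsto_finset_sum _ (fun i _ => ?_)
      have h1 : Tendsto (fun m => ‖(V m : ∀ _ : ℕ, 𝕜) i‖) atTop (𝓝 0) := by
        simpa using (hV0 i).norm
      have h2 := h1.rpow_const (Or.inr hqr.le)
      simpa [Real.zero_rpow hqr.ne'] using h2
    have e1 := l1.eventually_lt_const (by positivity : (0:ℝ) < en n ^ pr)
    have e2 := l2.eventually_lt_const (by positivity : (0:ℝ) < en n ^ qr)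
    exact (e1.and e2).exists
  -- choice of a cutoff with small tails
  have hK : ∀ n m c : ℕ, ∃ c', c < c' ∧
      (∑' i, ‖(D m : ∀ _ : ℕ, 𝕜) (i + c')‖ ^ pr) < en n ^ pr ∧
      (∑' i, ‖(V m : ∀ _ : ℕ, 𝕜) (i + c')‖ ^ qr) < en n ^ qr := by
    intro n m c
    have t1 := tendsto_sum_nat_add (fun i => ‖(D m : ∀ _ : ℕ, 𝕜) i‖ ^ pr)
    have t2 := tendsto_sum_nat_add (fun i => ‖(V m : ∀ _ : ℕ, 𝕜) i‖ ^ qr)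
    have e1 := t1.eventually_lt_const (by positivity : (0:ℝ) < en n ^ pr)
    have e2 := t2.eventually_lt_const (by positivity : (0:ℝ) < en n ^ qr)
    obtain ⟨c', h1, h2, h3⟩ := ((eventually_gt_atTop c).and (e1.and e2)).exists
    exact ⟨c', h1, h2, h3⟩
  -- recursive construction of cut points and indices
  let kf : ℕ → ℕ := fun n => Nat.rec 0
    (fun n' kn => Classical.choose (hK n' (Classical.choose (hM n' kn)) kn)) n
  let mf : ℕ → ℕ := fun n => Classical.choose (hM n (kf n))
  have hksucc : ∀ n, kf (n + 1) = Classical.choose (hK n (mf n) (kf n)) := fun n => rfl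
  have hM' : ∀ n,
      (∑ i ∈ Finset.range (kf n), ‖(D (mf n) : ∀ _ : ℕ, 𝕜) i‖ ^ pr) < en n ^ pr ∧
      (∑ i ∈ Finset.range (kf n), ‖(V (mf n) : ∀ _ : ℕ, 𝕜) i‖ ^ qr) < en n ^ qr :=
    fun n => Classical.choose_spec (hM n (kf n))
  have hK' : ∀ n, kf n < kf (n + 1) ∧
      (∑' i, ‖(D (mf n) : ∀ _ : ℕ, 𝕜) (i + kf (n + 1))‖ ^ pr) < en n ^ pr ∧
      (∑' i, ‖(V (mf n) : ∀ _ : ℕ, 𝕜) (i + kf (n + 1))‖ ^ qr) < en n ^ qr := by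
    intro n
    have h := Classical.choose_spec (hK n (mf n) (kf n))
    rw [hksucc n]
    exact h
  have hkmono : Monotone kf := monotone_nat_of_le_succ (fun n => (hK' n).1.le)
  -- blocks
  set a : ℕ → lp (fun _ : ℕ => 𝕜) p :=
    fun n => cut hpt (Set.Ico (kf n) (kf (n + 1))) (D (mf n)) with hadef
  set b : ℕ → lp (fun _ : ℕ => 𝕜) q :=
    fun n => cut hqt (Set.Ico (kf n) (kf (n + 1))) (V (mf n)) with hbdef
  -- error bounds
  have errD : ∀ n, ‖D (mf n) - a n‖ ≤ 2 * en n := by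
    intro n
    rw [hadef, cut_compl_eq, cut_Ico_compl hpt _ _ (hK' n).1.le]
    refine (norm_add_le _ _).trans ?_
    have h1 : ‖cut hpt {i | i < kf n} (D (mf n))‖ ≤ en n := by
      rw [← Real.rpow_le_rpow_iff (norm_nonneg _) (hen_pos n).le hpr, norm_head_rpow]
      exact (hM' n).1.le
    have h2 : ‖cut hpt {i | kf (n + 1) ≤ i} (D (mf n))‖ ≤ en n := by
      rw [← Real.rpow_le_rpow_iff (norm_nonneg _) (hen_pos n).le hpr, norm_tail_rpow]
      exact (hK' n).2.1.le
    linarith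
  have errV : ∀ n, ‖V (mf n) - b n‖ ≤ 2 * en n := by
    intro n
    rw [hbdef, cut_compl_eq, cut_Ico_compl hqt _ _ (hK' n).1.le]
    refine (norm_add_le _ _).trans ?_
    have h1 : ‖cut hqt {i | i < kf n} (V (mf n))‖ ≤ en n := by
      rw [← Real.rpow_le_rpow_iff (norm_nonneg _) (hen_pos n).le hqr, norm_head_rpow]
      exact (hM' n).2.le
    have h2 : ‖cut hqt {i | kf (n + 1) ≤ i} (V (mf n))‖ ≤ en n := by
      rw [← Real.rpow_le_rpow_iff (norm_nonneg _) (hen_pos n).le hqr, norm_tail_rpow]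
      exact (hK' n).2.2.le
    linarith
  -- lower bound for blocks in ℓq
  have hb_lb : ∀ n, δ / 2 ≤ ‖b n‖ := by
    intro n
    have h1 : ‖V (mf n)‖ ≤ ‖V (mf n) - b n‖ + ‖b n‖ := by
      have h := norm_add_le (V (mf n) - b n) (b n)
      rwa [sub_add_cancel] at h
    have h2 : δ ≤ ‖V (mf n)‖ := hTD (mf n)
    have h3 := errV n
    have h4 := hen_le n
    rw [hεdef] at h4
    linarith
  -- upper bound for blocks in ℓp
  have ha_ub : ∀ n, ‖a n‖ ≤ 1 := fun n => (norm_cut_le _ _ _).trans (hD (mf n))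
  -- error sums
  have hsum_err : ∀ N : ℕ, ∑ n ∈ Finset.range N, (2 * en n) ≤ δ / 2 := by
    intro N
    have h1 : ∑ n ∈ Finset.range N, (2 * en n)
        = 2 * ε * ∑ n ∈ Finset.range N, ((2:ℝ)⁻¹) ^ n := by
      rw [Finset.mul_sum]
      refine Finset.sum_congr rfl (fun n _ => ?_)
      rw [hendef]; ring
    have h2 : ∑ n ∈ Finset.range N, ((2:ℝ)⁻¹) ^ n ≤ 2 := by
      have h3 : ((2:ℝ)⁻¹ : ℝ) = 1 / 2 := by norm_num
      rw [h3]
      exact (Summable.sum_le_tsum (Finset.range N) (fun i _ => by positivity)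
        summable_geometric_two).trans (le_of_eq tsum_geometric_two)
    rw [h1, hεdef]
    nlinarith
  -- block supports
  have ha_supp : ∀ n i, (a n : ∀ _ : ℕ, 𝕜) i ≠ 0 → kf n ≤ i ∧ i < kf (n + 1) := by
    intro n i h
    refine Classical.byContradiction fun hni => ?_
    apply h
    rw [hadef]
    simp only [cut_apply]
    rw [Set.indicator_of_notMem]
    rw [Set.mem_Ico]
    omega
  have hb_supp : ∀ n i, (b n : ∀ _ : ℕ, 𝕜) i ≠ 0 → kf n ≤ i ∧ i < kf (n + 1) := by
    intro n i h
    refine Classical.byContradiction fun hni => ?_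
    apply h
    rw [hbdef]
    simp only [cut_apply]
    rw [Set.indicator_of_notMem]
    rw [Set.mem_Ico]
    omega
  -- the main inequality for each N
  have main : ∀ N : ℕ, (δ / 2) * (N : ℝ) ^ qr⁻¹ ≤ ‖T‖ * ((N : ℝ) ^ pr⁻¹ + δ / 2) + δ / 2 := by
    intro N
    set u : lp (fun _ : ℕ => 𝕜) p := ∑ n ∈ Finset.range N, D (mf n) with hu
    have hA : ‖∑ n ∈ Finset.range N, a n‖ ≤ (N : ℝ) ^ pr⁻¹ := by
      have h1 : ‖∑ n ∈ Finset.range N, a n‖ ^ pr = ∑ n ∈ Finset.range N, ‖a n‖ ^ pr :=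
        norm_sum_blocks_rpow hpt kf hkmono a ha_supp N
      have h2 : ∑ n ∈ Finset.range N, ‖a n‖ ^ pr ≤ (N : ℝ) := by
        calc ∑ n ∈ Finset.range N, ‖a n‖ ^ pr ≤ ∑ n ∈ Finset.range N, 1 :=
              Finset.sum_le_sum (fun n _ =>
                Real.rpow_le_one (norm_nonneg _) (ha_ub n) hpr.le)
          _ = (N : ℝ) := by simp
      have h3 : ‖∑ n ∈ Finset.range N, a n‖ ^ pr ≤ (N : ℝ) := h1 ▸ h2
      calc ‖∑ n ∈ Finset.range N, a n‖
          = (‖∑ n ∈ Finset.range N, a n‖ ^ pr) ^ pr⁻¹ :=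
            (Real.rpow_rpow_inv (norm_nonneg _) hpr.ne').symm
        _ ≤ (N : ℝ) ^ pr⁻¹ :=
            Real.rpow_le_rpow (Real.rpow_nonneg (norm_nonneg _) _) h3 (by positivity)
    have hu_ub : ‖u‖ ≤ (N : ℝ) ^ pr⁻¹ + δ / 2 := by
      have h1 : ‖u - ∑ n ∈ Finset.range N, a n‖ ≤ δ / 2 := by
        rw [hu, ← Finset.sum_sub_distrib]
        exact (norm_sum_le _ _).trans
          ((Finset.sum_le_sum (fun n _ => errD n)).trans (hsum_err N))
      have h2 : ‖u‖ ≤ ‖u - ∑ n ∈ Finset.range N, a n‖ + ‖∑ n ∈ Finset.range N, a n‖ := by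
        simpa using norm_add_le (u - ∑ n ∈ Finset.range N, a n) (∑ n ∈ Finset.range N, a n)
      linarith
    have hB : (δ / 2) * (N : ℝ) ^ qr⁻¹ ≤ ‖∑ n ∈ Finset.range N, b n‖ := by
      have h1 : ‖∑ n ∈ Finset.range N, b n‖ ^ qr = ∑ n ∈ Finset.range N, ‖b n‖ ^ qr :=
        norm_sum_blocks_rpow hqt kf hkmono b hb_supp N
      have h2 : (N : ℝ) * (δ / 2) ^ qr ≤ ∑ n ∈ Finset.range N, ‖b n‖ ^ qr := by
        calc (N : ℝ) * (δ / 2) ^ qr = ∑ n ∈ Finset.range N, (δ / 2) ^ qr := by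
              rw [Finset.sum_const, Finset.card_range, nsmul_eq_mul]
          _ ≤ ∑ n ∈ Finset.range N, ‖b n‖ ^ qr :=
              Finset.sum_le_sum (fun n _ =>
                Real.rpow_le_rpow (by positivity) (hb_lb n) hqr.le)
      have h3 : (N : ℝ) * (δ / 2) ^ qr ≤ ‖∑ n ∈ Finset.range N, b n‖ ^ qr := h1 ▸ h2
      calc (δ / 2) * (N : ℝ) ^ qr⁻¹ = ((N : ℝ) * (δ / 2) ^ qr) ^ qr⁻¹ := by
            rw [Real.mul_rpow (by positivity) (by positivity),
              Real.rpow_rpow_inv (by positivity) hqr.ne']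
            ring
        _ ≤ (‖∑ n ∈ Finset.range N, b n‖ ^ qr) ^ qr⁻¹ :=
            Real.rpow_le_rpow (by positivity) h3 (by positivity)
        _ = ‖∑ n ∈ Finset.range N, b n‖ := Real.rpow_rpow_inv (norm_nonneg _) hqr.ne'
    have hTu : ‖∑ n ∈ Finset.range N, b n‖ ≤ ‖T u‖ + δ / 2 := by
      have h0 : T u = ∑ n ∈ Finset.range N, V (mf n) := by rw [hu, map_sum]
      have h1 : ‖T u - ∑ n ∈ Finset.range N, b n‖ ≤ δ / 2 := by
        rw [h0, ← Finset.sum_sub_distrib]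
        exact (norm_sum_le _ _).trans
          ((Finset.sum_le_sum (fun n _ => errV n)).trans (hsum_err N))
      have h2 := norm_sub_le (T u) (T u - ∑ n ∈ Finset.range N, b n)
      rw [sub_sub_cancel] at h2
      linarith
    have h4 : ‖T u‖ ≤ ‖T‖ * ‖u‖ := T.le_opNorm u
    have h5 : ‖T‖ * ‖u‖ ≤ ‖T‖ * ((N : ℝ) ^ pr⁻¹ + δ / 2) :=
      mul_le_mul_of_nonneg_left hu_ub (norm_nonneg _)
    linarith
  -- final contradiction
  have hba : pr⁻¹ < qr⁻¹ := inv_strictAnti₀ hqr hqrpr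
  have htend : Tendsto (fun x : ℝ => (δ / 2) * x ^ qr⁻¹ - ‖T‖ * x ^ pr⁻¹) atTop atTop := by
    have h1 : Tendsto (fun x : ℝ => x ^ pr⁻¹ * ((δ / 2) * x ^ (qr⁻¹ - pr⁻¹) - ‖T‖))
        atTop atTop := by
      refine Filter.Tendsto.atTop_mul_atTop₀ (tendsto_rpow_atTop (by positivity)) ?_
      have := ((tendsto_rpow_atTop (y := qr⁻¹ - pr⁻¹) (by linarith)).const_mul_atTop
        (by positivity : (0:ℝ) < δ / 2))
      simpa [sub_eq_add_neg] using tendsto_atTop_add_const_right atTop (-‖T‖) this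
    refine h1.congr' ?_
    filter_upwards [eventually_gt_atTop (0 : ℝ)] with x hx
    have hxx : x ^ pr⁻¹ * x ^ (qr⁻¹ - pr⁻¹) = x ^ qr⁻¹ := by
      rw [← Real.rpow_add hx]; ring_nf
    calc x ^ pr⁻¹ * ((δ / 2) * x ^ (qr⁻¹ - pr⁻¹) - ‖T‖)
        = (δ / 2) * (x ^ pr⁻¹ * x ^ (qr⁻¹ - pr⁻¹)) - ‖T‖ * x ^ pr⁻¹ := by ring
      _ = (δ / 2) * x ^ qr⁻¹ - ‖T‖ * x ^ pr⁻¹ := by rw [hxx]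
  have hNt : Tendsto (fun N : ℕ => (δ / 2) * (N : ℝ) ^ qr⁻¹ - ‖T‖ * (N : ℝ) ^ pr⁻¹)
      atTop atTop := htend.comp tendsto_natCast_atTop_atTop
  obtain ⟨N, hN⟩ := (hNt.eventually_gt_atTop (‖T‖ * (δ / 2) + δ / 2)).exists
  have hmain := main N
  rw [mul_add] at hmain
  linarith

lemma exists_subseq_coord_conv {𝕜 : Type*} [RCLike 𝕜] (R : ℝ)
    (u v : ℕ → (ℕ → 𝕜)) (hu : ∀ n i, ‖u n i‖ ≤ R) (hv : ∀ n i, ‖v n i‖ ≤ R) :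
    ∃ (L1 L2 : ℕ → 𝕜) (φ : ℕ → ℕ), StrictMono φ ∧
      (∀ i, Tendsto (fun n => u (φ n) i) atTop (𝓝 (L1 i))) ∧
      (∀ i, Tendsto (fun n => v (φ n) i) atTop (𝓝 (L2 i))) := by
  set K : Set ((ℕ → 𝕜) × (ℕ → 𝕜)) :=
    (Set.univ.pi fun _ => closedBall (0 : 𝕜) R) ×ˢ (Set.univ.pi fun _ => closedBall (0 : 𝕜) R)
    with hKdef
  have hK : IsCompact K :=
    (isCompact_univ_pi fun _ => isCompact_closedBall 0 R).prod
      (isCompact_univ_pi fun _ => isCompact_closedBall 0 R)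
  have hmem : ∀ n, ((u n, v n) : (ℕ → 𝕜) × (ℕ → 𝕜)) ∈ K := by
    intro n
    constructor
    · intro i _
      simpa [mem_closedBall_zero_iff] using hu n i
    · intro i _
      simpa [mem_closedBall_zero_iff] using hv n i
  obtain ⟨L, _, φ, hφ, hconv⟩ := hK.isSeqCompact hmem
  refine ⟨L.1, L.2, φ, hφ, fun i => ?_, fun i => ?_⟩
  · have h1 : Tendsto (fun n => u (φ n)) atTop (𝓝 L.1) :=
      (continuous_fst.tendsto L).comp hconv
    exact ((continuous_apply i).tendsto L.1).comp h1
  · have h2 : Tendsto (fun n => v (φ n)) atTop (𝓝 L.2) :=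
      (continuous_snd.tendsto L).comp hconv
    exact ((continuous_apply i).tendsto L.2).comp h2

end PittAux

open PittAux in
/-- Pitt's theorem: if `1 < q < p < ∞` then every bounded operator `ℓ_p → ℓ_q` is compact; hence
`L(ℓ_p;ℓ_q) = L_K(ℓ_p;ℓ_q)` and the quotient `L/L_K` is the zero space. -/
theorem pitt (𝕜 : Type*) [RCLike 𝕜] (p q : ℝ≥0∞) [Fact (1 ≤ p)] [Fact (1 ≤ q)]
    (hq : 1 < q) (hqp : q < p) (hp : p < ⊤) :
    (∀ T : lp (fun _ : ℕ => 𝕜) p →L[𝕜] lp (fun _ : ℕ => 𝕜) q, IsCompactOperator T) ∧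
      compactOperator (RingHom.id 𝕜) (lp (fun _ : ℕ => 𝕜) p) (lp (fun _ : ℕ => 𝕜) q) = ⊤ ∧
      Subsingleton ((lp (fun _ : ℕ => 𝕜) p →L[𝕜] lp (fun _ : ℕ => 𝕜) q) ⧸
        compactOperator (RingHom.id 𝕜) (lp (fun _ : ℕ => 𝕜) p) (lp (fun _ : ℕ => 𝕜) q)) := by
  have hp0 : p ≠ 0 := by
    intro h
    exact absurd (h ▸ (Fact.out : (1:ℝ≥0∞) ≤ p)) (by simp)
  have key : ∀ T : lp (fun _ : ℕ => 𝕜) p →L[𝕜] lp (fun _ : ℕ => 𝕜) q, IsCompactOperator T := by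
    intro T
    have tb : TotallyBounded (⇑T '' closedBall 0 1) := by
      by_contra htb
      rw [Metric.totallyBounded_iff] at htb
      push_neg at htb
      obtain ⟨ε, hε, hsep⟩ := htb
      classical
      have next : ∀ t : Finset (lp (fun _ : ℕ => 𝕜) q), ∃ x : lp (fun _ : ℕ => 𝕜) p,
          x ∈ closedBall 0 1 ∧ ∀ y ∈ t, ε ≤ ‖T x - y‖ := by
        intro t
        have h := hsep (↑t) t.finite_toSet
        rw [Set.not_subset] at h
        obtain ⟨z, hz1, hz2⟩ := h
        obtain ⟨x, hx, rfl⟩ := hz1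
        refine ⟨x, hx, fun y hy => ?_⟩
        by_contra hc
        push_neg at hc
        refine hz2 (Set.mem_biUnion (show y ∈ (↑t : Set _) from hy) ?_)
        rwa [mem_ball, dist_eq_norm]
      let nextF : Finset (lp (fun _ : ℕ => 𝕜) q) → lp (fun _ : ℕ => 𝕜) p :=
        fun t => Classical.choose (next t)
      let ts : ℕ → Finset (lp (fun _ : ℕ => 𝕜) q) :=
        fun n => Nat.rec ∅ (fun _ t => insert (T (nextF t)) t) n
      let x : ℕ → lp (fun _ : ℕ => 𝕜) p := fun n => nextF (ts n)
      have hts : ∀ n, ts (n + 1) = insert (T (x n)) (ts n) := fun n => rfl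
      have hx1 : ∀ n, x n ∈ closedBall 0 1 := fun n => (Classical.choose_spec (next (ts n))).1
      have hx2 : ∀ n, ∀ y ∈ ts n, ε ≤ ‖T (x n) - y‖ :=
        fun n => (Classical.choose_spec (next (ts n))).2
      have hmem : ∀ m n, m < n → T (x m) ∈ ts n := by
        intro m n h
        induction n with
        | zero => omega
        | succ n ih =>
          rw [hts]
          rcases Nat.lt_succ_iff_lt_or_eq.mp h with h' | h'
          · exact Finset.mem_insert_of_mem (ih h')
          · subst h'
            exact Finset.mem_insert_self _ _
      have hsep' : ∀ m n, m < n → ε ≤ ‖T (x n) - T (x m)‖ :=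
        fun m n h => hx2 n _ (hmem m n h)
      have hxb : ∀ n, ‖x n‖ ≤ 1 := by
        intro n
        have := hx1 n
        rwa [mem_closedBall_zero_iff] at this
      set R : ℝ := max 1 ‖T‖ with hRdef
      have hub : ∀ n i, ‖(x n : ∀ _ : ℕ, 𝕜) i‖ ≤ R := fun n i =>
        ((lp.norm_apply_le_norm hp0 (x n) i).trans (hxb n)).trans (le_max_left _ _)
      have hvb : ∀ n i, ‖(T (x n) : ∀ _ : ℕ, 𝕜) i‖ ≤ R := by
        intro n i
        have hq0 : q ≠ 0 := by
          intro h
          exact absurd (h ▸ (Fact.out : (1:ℝ≥0∞) ≤ q)) (by simp)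
        refine (lp.norm_apply_le_norm hq0 (T (x n)) i).trans ?_
        refine (T.le_opNorm (x n)).trans ?_
        have h1 : ‖T‖ * ‖x n‖ ≤ ‖T‖ * 1 :=
          mul_le_mul_of_nonneg_left (hxb n) (norm_nonneg _)
        rw [mul_one] at h1
        exact h1.trans (le_max_right _ _)
      obtain ⟨L1, L2, φ, hφ, hc1, hc2⟩ := exists_subseq_coord_conv R
        (fun n => ⇑(x n)) (fun n => ⇑(T (x n))) hub hvb
      set D : ℕ → lp (fun _ : ℕ => 𝕜) p :=
        fun n => (2 : 𝕜)⁻¹ • (x (φ (n + 1)) - x (φ n)) with hDdef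
      have hDb : ∀ n, ‖D n‖ ≤ 1 := by
        intro n
        rw [hDdef]
        simp only []
        rw [norm_smul, norm_inv, RCLike.norm_ofNat]
        have h1 := norm_sub_le (x (φ (n + 1))) (x (φ n))
        have h2 := hxb (φ (n + 1))
        have h3 := hxb (φ n)
        have h4 : ‖x (φ (n + 1)) - x (φ n)‖ ≤ 2 := by linarith
        linarith [norm_nonneg (x (φ (n + 1)) - x (φ n))]
      have hTD : ∀ n, ε / 2 ≤ ‖T (D n)‖ := by
        intro n
        have hTeq : T (D n) = (2 : 𝕜)⁻¹ • (T (x (φ (n + 1))) - T (x (φ n))) := by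
          rw [hDdef]
          simp only []
          rw [map_smul, map_sub]
        rw [hTeq, norm_smul, norm_inv, RCLike.norm_ofNat]
        have h1 := hsep' (φ n) (φ (n + 1)) (hφ (Nat.lt_succ_self n))
        linarith
      have hD0 : ∀ j, Tendsto (fun n => (D n : ∀ _ : ℕ, 𝕜) j) atTop (𝓝 (0 : 𝕜)) := by
        intro j
        have h1 : Tendsto (fun n => (x (φ (n + 1)) : ∀ _ : ℕ, 𝕜) j) atTop (𝓝 (L1 j)) :=
          (hc1 j).comp (tendsto_add_atTop_nat 1)
        have h3 := (h1.sub (hc1 j)).const_mul ((2 : 𝕜)⁻¹)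
        rw [sub_self, mul_zero] at h3
        refine Tendsto.congr (fun n => ?_) h3
        rw [hDdef]
        simp only [lp.coeFn_smul, lp.coeFn_sub, Pi.smul_apply, Pi.sub_apply, smul_eq_mul]
      have hV0 : ∀ j, Tendsto (fun n => (T (D n) : ∀ _ : ℕ, 𝕜) j) atTop (𝓝 (0 : 𝕜)) := by
        intro j
        have h1 : Tendsto (fun n => (T (x (φ (n + 1))) : ∀ _ : ℕ, 𝕜) j) atTop (𝓝 (L2 j)) :=
          (hc2 j).comp (tendsto_add_atTop_nat 1)
        have h3 := (h1.sub (hc2 j)).const_mul ((2 : 𝕜)⁻¹)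
        rw [sub_self, mul_zero] at h3
        refine Tendsto.congr (fun n => ?_) h3
        have hTeq : T (D n) = (2 : 𝕜)⁻¹ • (T (x (φ (n + 1))) - T (x (φ n))) := by
          rw [hDdef]
          simp only []
          rw [map_smul, map_sub]
        rw [hTeq]
        simp only [lp.coeFn_smul, lp.coeFn_sub, Pi.smul_apply, Pi.sub_apply, smul_eq_mul]
      exact glide hqp hp T D hDb (ε / 2) (by positivity) hTD hD0 hV0
    have hcpt : IsCompact (closure (⇑T '' closedBall 0 1)) :=
      TotallyBounded.isCompact_of_isClosed tb.closure isClosed_closure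
    exact ⟨_, hcpt, Filter.mem_of_superset (closedBall_mem_nhds 0 one_pos)
      (fun y hy => subset_closure (Set.mem_image_of_mem _ hy))⟩
  refine ⟨key, ?_, ?_⟩
  · rw [Submodule.eq_top_iff']
    intro T
    exact key T
  · rw [Submodule.Quotient.subsingleton_iff, Submodule.eq_top_iff']
    intro T
    exact key T
end
end
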